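/- arXiv:1112.1471 — 5 statements merged into one kernel-verified Lean document; each statement's English description precedes it below -/
import Mathlib

section
/- Let φ : ℝᵐ → ℝᵐ be linear with m = n+1, and suppose |det φ| = m^{-m/2} ‖φ‖_{HS}^m with det φ ≥ 0. Then φ^T φ = (‖φ‖_{HS}²/m) · I, i.e. φ = λ O for λ = ‖φ‖_{HS}/√m and some orthogonal O with det O ≥ 0. -/
open Matrix Finset

lemma amgm_eq_case {m : ℕ} (hm : 0 < m) (lam : Fin m → ℝ) (hpos : ∀ i, 0 < lam i)
    (h : ∏ i, lam i = ((∑ i, lam i) / m) ^ m) (i : Fin m) :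
    lam i = (∑ j, lam j) / m := by
  have hmR : (0:ℝ) < m := by exact_mod_cast hm
  set S := ∑ j, lam j with hS
  have key : ∀ j k : Fin m, lam j = lam k := by
    have h1 : ∑ j, (m:ℝ)⁻¹ • lam j = S / m := by
      rw [← Finset.smul_sum]; simp [hS, smul_eq_mul, div_eq_inv_mul]
    have h2 : Real.log (∏ j, lam j) = ∑ j, Real.log (lam j) :=
      Real.log_prod (fun j _ => (hpos j).ne')
    have h3 : Real.log ((S/(m:ℝ))^m) = m * Real.log (S/m) := Real.log_pow _ _
    have heq : Real.log (∑ j, (m:ℝ)⁻¹ • lam j) ≤ ∑ j, (m:ℝ)⁻¹ • Real.log (lam j) := by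
      have h4 : ∑ j, (m:ℝ)⁻¹ • Real.log (lam j) = (m:ℝ)⁻¹ * ∑ j, Real.log (lam j) := by
        rw [← Finset.smul_sum]; rfl
      rw [h1, h4, ← h2, h, h3]
      field_simp
      exact le_rfl
    have := strictConcaveOn_log_Ioi.eq_of_map_sum_eq
      (t := Finset.univ) (w := fun _ : Fin m => (m:ℝ)⁻¹) (p := lam)
      (fun j _ => by positivity)
      (by simp [Finset.card_univ]; field_simp)
      (fun j _ => hpos j)
      heq
    intro j k; exact this (Finset.mem_univ j) (Finset.mem_univ k)
  have hsum : S = m * lam i := by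
    rw [hS, Finset.sum_congr rfl (fun j _ => key j i)]
    simp [mul_comm]
  rw [hsum]; field_simp

lemma trace_eq_sum_eigs {m : ℕ} {A : Matrix (Fin m) (Fin m) ℝ} (hA : A.IsHermitian) :
    A.trace = ∑ i, hA.eigenvalues i := by
  conv_lhs => rw [hA.spectral_theorem]
  rw [Unitary.conjStarAlgAut_apply]
  rw [Matrix.trace_mul_comm, ← mul_assoc,
    Matrix.mem_unitaryGroup_iff'.mp (hA.eigenvectorUnitary).2, one_mul]
  simp [Matrix.trace_diagonal]

lemma eq_smul_one_of_eigs {m : ℕ} {A : Matrix (Fin m) (Fin m) ℝ} (hA : A.IsHermitian)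
    {c : ℝ} (h : ∀ i, hA.eigenvalues i = c) : A = c • 1 := by
  have hd : Matrix.diagonal (RCLike.ofReal ∘ hA.eigenvalues) =
      c • (1 : Matrix (Fin m) (Fin m) ℝ) := by
    ext i j
    by_cases hij : i = j <;>
      simp [Matrix.diagonal, hij, h, Matrix.one_apply]
  conv_lhs => rw [hA.spectral_theorem]
  rw [hd, Unitary.conjStarAlgAut_apply, Matrix.mul_smul, Matrix.smul_mul, mul_one,
    Matrix.mem_unitaryGroup_iff.mp (hA.eigenvectorUnitary).2]


set_option maxHeartbeats 1600000 in
/-- equality case of the Hadamard-type inequality. If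
`|det φ| = m^{-m/2} ‖φ‖_HS^m` (m = n+1) and `det φ ≥ 0`, then
`φᵀ φ = (‖φ‖_HS²/m)·I`, i.e. `φ = λ O` with `λ = ‖φ‖_HS/√m` and `O`
orthogonal with nonnegative determinant. -/
theorem stmt_4 (n : ℕ) (φ : Matrix (Fin (n+1)) (Fin (n+1)) ℝ)
    (hdet : 0 ≤ φ.det)
    (heq : |φ.det| = ((n+1 : ℝ)) ^ (-((n+1 : ℝ)) / 2) *
      (Real.sqrt (∑ i, ∑ j, φ i j ^ 2)) ^ (n+1)) :
    φ.transpose * φ = ((∑ i, ∑ j, φ i j ^ 2) / (n+1 : ℝ)) • (1 : Matrix (Fin (n+1)) (Fin (n+1)) ℝ) ∧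
    ∃ O : Matrix (Fin (n+1)) (Fin (n+1)) ℝ,
      O ∈ Matrix.orthogonalGroup (Fin (n+1)) ℝ ∧ 0 ≤ O.det ∧
      φ = (Real.sqrt (∑ i, ∑ j, φ i j ^ 2) / Real.sqrt (n+1 : ℝ)) • O := by
  set T : ℝ := ∑ i, ∑ j, φ i j ^ 2 with hT
  have hTnn : (0:ℝ) ≤ T := by positivity
  have hmR : (0:ℝ) < (n+1:ℝ) := by positivity
  have hA : (φ.transpose * φ).IsHermitian := by
    have := Matrix.isHermitian_conjTranspose_mul_self φ
    rwa [Matrix.conjTranspose_eq_transpose_of_trivial] at this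
  have hPSD : (φ.transpose * φ).PosSemidef := by
    have := Matrix.posSemidef_conjTranspose_mul_self φ
    rwa [Matrix.conjTranspose_eq_transpose_of_trivial] at this
  have htrace : (φ.transpose * φ).trace = T := by
    rw [hT]
    simp only [Matrix.trace, Matrix.diag, Matrix.mul_apply, Matrix.transpose_apply, ← pow_two]
    exact Finset.sum_comm
  have hdet2 : (φ.transpose * φ).det = φ.det ^ 2 := by
    rw [Matrix.det_mul, Matrix.det_transpose, sq]
  have hdabs : φ.det = ((n+1 : ℝ)) ^ (-((n+1 : ℝ)) / 2) * (Real.sqrt T) ^ (n+1) := by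
    rw [← abs_of_nonneg hdet]; exact heq
  have hdetsq : φ.det ^ 2 = (T / (n+1:ℝ)) ^ (n+1) := by
    rw [hdabs, mul_pow, ← pow_mul, mul_comm (n+1) 2, pow_mul, Real.sq_sqrt hTnn]
    rw [← Real.rpow_natCast (((n+1:ℝ)) ^ (-((n+1 : ℝ)) / 2)) 2, ← Real.rpow_mul hmR.le]
    have he : (-((n+1:ℝ)) / 2) * (2:ℕ) = -(((n+1:ℕ)):ℝ) := by push_cast; ring
    rw [he, Real.rpow_neg hmR.le, Real.rpow_natCast, div_pow]
    ring
  by_cases hT0 : T = 0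
  · have hzero : φ = 0 := by
      have h1 : ∀ i ∈ (Finset.univ : Finset (Fin (n+1))), ∑ j, φ i j ^ 2 = 0 := by
        apply (Finset.sum_eq_zero_iff_of_nonneg (fun i _ => by positivity)).mp
        rw [← hT]; exact hT0
      ext i j
      have h2 := (Finset.sum_eq_zero_iff_of_nonneg (fun j _ => sq_nonneg _)).mp
        (h1 i (Finset.mem_univ i)) j (Finset.mem_univ j)
      simpa using pow_eq_zero_iff (n := 2) (by norm_num) |>.mp h2
    refine ⟨by rw [hzero, hT0]; simp, 1, ?_, by simp, by rw [hzero, hT0]; simp⟩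
    rw [Matrix.mem_orthogonalGroup_iff]; simp
  · have hTpos : 0 < T := lt_of_le_of_ne hTnn (Ne.symm hT0)
    have hdpos : 0 < φ.det := by
      rcases lt_or_eq_of_le hdet with h | h
      · exact h
      · exfalso
        have : (T / (n+1:ℝ)) ^ (n+1) = 0 := by rw [← hdetsq, ← h]; ring
        have := pow_eq_zero_iff (n := n+1) (by omega) |>.mp this
        have : T = 0 := by field_simp at this; linarith [this]
        exact hT0 this
    set lam := hA.eigenvalues with hlam
    have hsum : ∑ i, lam i = T := by rw [← trace_eq_sum_eigs hA, htrace]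
    have hprod : ∏ i, lam i = φ.det ^ 2 := by
      have := hA.det_eq_prod_eigenvalues
      rw [hdet2] at this
      simpa using this.symm
    have hpos : ∀ i, 0 < lam i := by
      intro i
      rcases lt_or_eq_of_le (hPSD.eigenvalues_nonneg i) with h | h
      · exact h
      · exfalso
        have : ∏ i, lam i = 0 := Finset.prod_eq_zero (Finset.mem_univ i) h.symm
        rw [hprod] at this
        nlinarith [hdpos]
    have heigs : ∀ i, lam i = T / (n+1:ℝ) := by
      intro i
      have := amgm_eq_case (Nat.succ_pos n) lam hpos (by
        rw [hprod, hdetsq, hsum]; norm_cast) i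
      rw [hsum] at this
      rw [this]; push_cast; ring_nf
    have hmain : φ.transpose * φ = (T / (n+1:ℝ)) • 1 := eq_smul_one_of_eigs hA heigs
    refine ⟨hmain, (Real.sqrt (n+1:ℝ) / Real.sqrt T) • φ, ?_, ?_, ?_⟩
    · rw [Matrix.mem_orthogonalGroup_iff']
      rw [Matrix.transpose_smul]
      rw [Matrix.smul_mul, Matrix.mul_smul, smul_smul, hmain, smul_smul]
      have : Real.sqrt (n+1:ℝ) / Real.sqrt T * (Real.sqrt (n+1:ℝ) / Real.sqrt T) *
          (T / (n+1:ℝ)) = 1 := by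
        rw [div_mul_div_comm, Real.mul_self_sqrt hmR.le, Real.mul_self_sqrt hTnn]
        field_simp
      rw [this, one_smul]
    · rw [Matrix.det_smul]
      exact mul_nonneg (pow_nonneg (by positivity) _) hdet
    · rw [smul_smul]
      have : Real.sqrt T / Real.sqrt (n+1:ℝ) * (Real.sqrt (n+1:ℝ) / Real.sqrt T) = 1 := by
        rw [div_mul_div_comm, mul_comm (Real.sqrt T)]
        field_simp
      rw [this, one_smul]
end

section
/- Let (M,g) be a Riemannian manifold with an n-compatible triad, so that the (n+1)-form ω is a calibration (comass ≤ 1 and equality characterized by J), and let u : X → M be a smooth map from an oriented Riemannian (n+1)-manifold. Then pointwise u*ω(e₀ ∧ ... ∧ eₙ) ≤ (n+1)^{-(n+1)/2} |du|^{n+1} for any oriented orthonormal frame (e₀,...,eₙ) of T_xX, where |du| is the Hilbert–Schmidt norm of du. In particular E_{n+1}(u) := (n+1)^{-(n+1)/2} ∫_X |du|^{n+1} dVol_X ≥ ∫_X u*ω. -/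
open scoped RealInnerProductSpace
open Matrix
open InnerProductSpace

instance myWF (m : ℕ) : WellFoundedLT (Fin m) := Finite.to_wellFoundedLT

lemma gram_det_le_prod {W : Type*} [NormedAddCommGroup W] [InnerProductSpace ℝ W]
    {m : ℕ} (v : Fin m → W) :
    (Matrix.of fun i j : Fin m => (inner ℝ (v i) (v j) : ℝ)).det ≤ ∏ i, ‖v i‖ ^ 2 := by
  by_cases hli : LinearIndependent ℝ v
  · obtain ⟨g, hg⟩ : ∃ g : Fin m → W, g = gramSchmidtNormed ℝ v := ⟨_, rfl⟩
    have hortho : Orthonormal ℝ g := hg ▸ gramSchmidtNormed_orthonormal hli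
    obtain ⟨M, hM⟩ : ∃ M : Matrix (Fin m) (Fin m) ℝ,
        M = Matrix.of fun k j => (inner ℝ (g k) (v j) : ℝ) := ⟨_, rfl⟩
    have hmem : ∀ j, v j ∈ Submodule.span ℝ (Set.range g) := by
      intro j
      rw [hg, span_gramSchmidtNormed_range, span_gramSchmidt]
      exact Submodule.subset_span ⟨j, rfl⟩
    have hrepr : ∀ j, v j = ∑ k, (inner ℝ (g k) (v j) : ℝ) • g k := by
      intro j
      obtain ⟨c, hc⟩ := (Submodule.mem_span_range_iff_exists_fun ℝ).mp (hmem j)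
      have hck : ∀ k, (inner ℝ (g k) (v j) : ℝ) = c k := by
        intro k
        rw [← hc]
        simpa using hortho.inner_right_fintype c k
      simp_rw [hck]
      exact hc.symm
    have hfact : (Matrix.of fun i j : Fin m => (inner ℝ (v i) (v j) : ℝ)) = Mᵀ * M := by
      ext i j
      simp only [Matrix.mul_apply, Matrix.transpose_apply, hM, Matrix.of_apply]
      conv_lhs => rw [hrepr j, inner_sum]
      refine Finset.sum_congr rfl fun k _ => ?_
      rw [real_inner_smul_right, real_inner_comm (v i) (g k)]
      ring
    have htri : M.BlockTriangular id := by
      intro k j hjk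
      simp only [id] at hjk
      rw [hM]
      simp only [Matrix.of_apply]
      have hvj : v j ∈ Submodule.span ℝ (gramSchmidt ℝ v '' Set.Iic j) :=
        mem_span_gramSchmidt ℝ v le_rfl
      have horth : ∀ x ∈ gramSchmidt ℝ v '' Set.Iic j, (inner ℝ (g k) x : ℝ) = 0 := by
        rintro x ⟨l, hl, rfl⟩
        have hlk : k ≠ l := fun h => absurd (h ▸ hl) (not_le.mpr hjk)
        rw [hg, gramSchmidtNormed, real_inner_smul_left,
          gramSchmidt_orthogonal ℝ v hlk]
        simp
      exact Submodule.span_induction (fun x hx => horth x hx) (inner_zero_right _)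
        (fun x y _ _ hx hy => by rw [inner_add_right, hx, hy, add_zero])
        (fun a x _ hx => by rw [real_inner_smul_right, hx, mul_zero]) hvj
    have hdet : M.det = ∏ i, M i i := Matrix.det_of_upperTriangular htri
    rw [hfact, Matrix.det_mul, Matrix.det_transpose, hdet, ← Finset.prod_mul_distrib]
    refine Finset.prod_le_prod (fun i _ => mul_self_nonneg _) (fun i _ => ?_)
    have h1 : |M i i| ≤ ‖v i‖ := by
      rw [hM]
      calc |(inner ℝ (g i) (v i) : ℝ)| ≤ ‖g i‖ * ‖v i‖ := abs_real_inner_le_norm _ _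
        _ = ‖v i‖ := by rw [hortho.1 i, one_mul]
    calc M i i * M i i = |M i i| * |M i i| := (abs_mul_abs_self _).symm
      _ ≤ ‖v i‖ * ‖v i‖ := mul_le_mul h1 h1 (abs_nonneg _) (norm_nonneg _)
      _ = ‖v i‖ ^ 2 := (sq ‖v i‖).symm
  · obtain ⟨c, hc, i₀, hi₀⟩ := Fintype.not_linearIndependent_iff.mp hli
    have hz : (Matrix.of fun i j : Fin m => (inner ℝ (v i) (v j) : ℝ)).det = 0 := by
      rw [← Matrix.exists_mulVec_eq_zero_iff]
      refine ⟨c, fun h => hi₀ (congrFun h i₀), ?_⟩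
      ext i
      simp only [Matrix.mulVec, dotProduct, Matrix.of_apply, Pi.zero_apply]
      have : ∑ j, (inner ℝ (v i) (v j) : ℝ) * c j = inner ℝ (v i) (∑ j, c j • v j) := by
        rw [inner_sum]
        exact Finset.sum_congr rfl fun j _ => by rw [real_inner_smul_right]; ring
      rw [this, hc, inner_zero_right]
    rw [hz]
    positivity

/-- pointwise form, as a statement about the differential
`φ = du_x` at a point: if `ω` is the calibration `(n+1)`-form of a
compatible `n`-triad on `W` (given by a comass-one vector cross product `J`),
`φ : V → W` is linear (the differential of `u` at `x`) and `(e₀,...,eₙ)` is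
an orthonormal frame of `V = T_xX`, then
`u*ω(e₀ ∧ ... ∧ eₙ) = ω(φe₀,...,φeₙ) ≤ (n+1)^{-(n+1)/2} |φ|^{n+1}`,
where `|φ|` is the Hilbert–Schmidt norm `√(∑ ‖φ(eᵢ)‖²)`.  Integrating this
pointwise bound over `X` gives `E_{n+1}(u) ≥ ∫_X u*ω`. -/
theorem stmt_5 {V W : Type*}
    [NormedAddCommGroup V] [InnerProductSpace ℝ V] [FiniteDimensional ℝ V]
    [NormedAddCommGroup W] [InnerProductSpace ℝ W] [FiniteDimensional ℝ W]
    (n : ℕ)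
    (J : (Fin n → W) → W) (ω : W [⋀^Fin (n+1)]→ₗ[ℝ] ℝ)
    (hω : ∀ A : Fin (n+1) → W,
      (inner ℝ (A 0) (J (fun i : Fin n => A i.succ)) : ℝ) = ω A)
    (hcomass : ∀ A : Fin n → W,
      ‖J A‖ ^ 2 = (Matrix.of fun i j : Fin n => (inner ℝ (A i) (A j) : ℝ)).det)
    (φ : V →ₗ[ℝ] W) (e : OrthonormalBasis (Fin (n+1)) ℝ V) :
    ω (fun i => φ (e i)) ≤
      ((n+1 : ℝ)) ^ (-((n+1 : ℝ)) / 2) *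
        (Real.sqrt (∑ i, ‖φ (e i)‖ ^ 2)) ^ (n+1) := by
  set A : Fin (n+1) → W := fun i => φ (e i) with hA
  -- Step 1: ω A ≤ ∏ ‖A i‖
  have step1 : ω A ≤ ∏ i, ‖A i‖ := by
    rw [← hω A]
    have h1 : (inner ℝ (A 0) (J fun i : Fin n => A i.succ) : ℝ) ≤
        ‖A 0‖ * ‖J fun i : Fin n => A i.succ‖ := real_inner_le_norm _ _
    have h2 : ‖J fun i : Fin n => A i.succ‖ ≤ ∏ i : Fin n, ‖A i.succ‖ := by
      have h3 : ‖J fun i : Fin n => A i.succ‖ ^ 2 ≤ (∏ i : Fin n, ‖A i.succ‖) ^ 2 := by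
        rw [hcomass, ← Finset.prod_pow]
        exact gram_det_le_prod _
      have h4 := Real.sqrt_le_sqrt h3
      rwa [Real.sqrt_sq (norm_nonneg _), Real.sqrt_sq (by positivity)] at h4
    calc (inner ℝ (A 0) (J fun i : Fin n => A i.succ) : ℝ)
        ≤ ‖A 0‖ * ‖J fun i : Fin n => A i.succ‖ := h1
      _ ≤ ‖A 0‖ * ∏ i : Fin n, ‖A i.succ‖ :=
          mul_le_mul_of_nonneg_left h2 (norm_nonneg _)
      _ = ∏ i, ‖A i‖ := (Fin.prod_univ_succ fun i => ‖A i‖).symm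
  -- Step 2: AM-GM
  set N : ℝ := (n+1 : ℝ) with hN
  have hN0 : (0:ℝ) < N := by positivity
  set S : ℝ := ∑ i, ‖A i‖ ^ 2 with hS
  have hS0 : 0 ≤ S := by positivity
  have amgm : ∏ i, (‖A i‖ ^ 2) ^ ((1:ℝ)/N) ≤ (1/N) * S := by
    rw [hS, Finset.mul_sum]
    exact Real.geom_mean_le_arith_mean_weighted Finset.univ _ _
      (fun i _ => by positivity) (by simp [Finset.sum_const, hN]; field_simp)
      (fun i _ => by positivity)
  have key : ∏ i, ‖A i‖ ≤ ((1/N) * S) ^ (N/2 : ℝ) := by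
    have hmono := Real.rpow_le_rpow (by positivity) amgm (by positivity : (0:ℝ) ≤ N/2)
    calc ∏ i, ‖A i‖ = (∏ i, (‖A i‖ ^ 2) ^ ((1:ℝ)/N)) ^ (N/2 : ℝ) := by
          rw [← Real.finset_prod_rpow _ _ (fun i _ => by positivity)]
          refine (Finset.prod_congr rfl fun i _ => ?_).symm
          rw [← Real.rpow_natCast (‖A i‖) 2, ← Real.rpow_mul (norm_nonneg _),
            ← Real.rpow_mul (norm_nonneg _)]
          norm_num
          rw [show (2:ℝ) * N⁻¹ * (N / 2) = 1 by field_simp, Real.rpow_one]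
      _ ≤ ((1/N) * S) ^ (N/2 : ℝ) := hmono
  -- Step 3: rewrite RHS
  have rhs_eq : N ^ (-N / 2 : ℝ) * (Real.sqrt S) ^ (n+1) = ((1/N) * S) ^ (N/2 : ℝ) := by
    rw [Real.mul_rpow (by positivity) hS0]
    congr 1
    · rw [one_div, Real.inv_rpow hN0.le, ← Real.rpow_neg hN0.le, neg_div]
    · rw [Real.sqrt_eq_rpow, ← Real.rpow_natCast (S ^ ((1:ℝ)/2)) (n+1),
        ← Real.rpow_mul hS0]
      congr 1
      push_cast [hN]
      ring
  calc ω A ≤ ∏ i, ‖A i‖ := step1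
    _ ≤ ((1/N) * S) ^ (N/2 : ℝ) := key
    _ = N ^ (-N / 2 : ℝ) * (Real.sqrt S) ^ (n+1) := rhs_eq.symm
end

section
/- Linear model of Lemma (Ortholem): Let V, W be real inner product spaces with dim V = n+1, let J : Λⁿ W → W be a vector cross product on W, and let φ : V → W be linear. Suppose φ satisfies the linear multi-Cauchy–Riemann equation: for every orthonormal positively-oriented basis (e₀,...,eₙ) of V and each i, λ^{n-1} φ(eᵢ) = (-1)^{n(n-i)} J(φ(e_{i+1}) ∧ ... ∧ φ(e_{i-1})) (indices mod n+1), where λ = (n+1)^{-1/2} ‖φ‖_{HS}. If λ > 0, then the vectors (λ^{-1} φ(e₀), ..., λ^{-1} φ(eₙ)) form an orthonormal (n+1)-frame in W. -/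
/-- linear model of the orthonormality lemma: let `V`, `W` be
real inner product spaces, `dim V = n+1`, `V` oriented, `J` a vector cross
product on `W` (alternating form `ω` plus comass one, with `Λⁿ` encoded by
tuples and Gram determinants), and `φ : V → W` linear.  If for every
positively-oriented orthonormal basis `(e₀,...,eₙ)` of `V` and each `i`,
`λ^{n-1} φ(eᵢ) = (-1)^{n(n-i)} J(φ(e_{i+1}) ∧ ... ∧ φ(e_{i-1}))` (indices
mod `n+1`), where `λ = (n+1)^{-1/2}‖φ‖_HS`, and `λ > 0`, then
`(λ⁻¹φ(e₀),...,λ⁻¹φ(eₙ))` is an orthonormal frame in `W`. -/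
theorem stmt_6 {V W : Type*}
    [NormedAddCommGroup V] [InnerProductSpace ℝ V] [FiniteDimensional ℝ V]
    [NormedAddCommGroup W] [InnerProductSpace ℝ W]
    (n : ℕ) (hdim : Module.finrank ℝ V = n + 1)
    (o : Orientation ℝ V (Fin (n+1)))
    (J : (Fin n → W) → W) (ω : W [⋀^Fin (n+1)]→ₗ[ℝ] ℝ)
    (hω : ∀ A : Fin (n+1) → W,
      (inner ℝ (A 0) (J (fun i : Fin n => A i.succ)) : ℝ) = ω A)
    (hcomass : ∀ A : Fin n → W,
      ‖J A‖ ^ 2 = (Matrix.of fun i j : Fin n => (inner ℝ (A i) (A j) : ℝ)).det)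
    (φ : V →ₗ[ℝ] W)
    (lam : ℝ)
    (hlam : ∀ e : OrthonormalBasis (Fin (n+1)) ℝ V,
      lam = ((n+1 : ℝ)) ^ (-(1:ℝ)/2) * Real.sqrt (∑ i, ‖φ (e i)‖ ^ 2))
    (hMCR : ∀ e : OrthonormalBasis (Fin (n+1)) ℝ V,
      e.toBasis.orientation = o →
      ∀ i : Fin (n+1),
        lam ^ (n-1) • φ (e i) =
          ((-1 : ℝ)) ^ (n * (n - (i : ℕ))) •
            J (fun j : Fin n => φ (e (i + j.succ))))
    (hpos : 0 < lam) :
    ∀ e : OrthonormalBasis (Fin (n+1)) ℝ V, e.toBasis.orientation = o →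
      Orthonormal ℝ (fun i : Fin (n+1) => lam⁻¹ • φ (e i)) := by
  intro e he
  set v : Fin (n+1) → W := fun i => φ (e i) with hv
  -- orthogonality
  have horth : ∀ k i : Fin (n+1), k ≠ i → (inner ℝ (v k) (v i) : ℝ) = 0 := by
    intro k i hki
    have h := hMCR e he i
    have h2 : (inner ℝ (v k) (lam ^ (n-1) • v i) : ℝ)
        = inner ℝ (v k) (((-1:ℝ)) ^ (n * (n - (i:ℕ))) • J (fun j : Fin n => v (i + j.succ))) := by
      rw [← h]
    rw [real_inner_smul_right, real_inner_smul_right] at h2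
    set A : Fin (n+1) → W := fun m => if m = 0 then v k else v (i + m) with hA
    have hA0 : A 0 = v k := if_pos rfl
    have hAs : (fun j : Fin n => A j.succ) = fun j : Fin n => v (i + j.succ) := by
      funext j; simp [hA, Fin.succ_ne_zero]
    have hωA := hω A
    rw [hA0, hAs] at hωA
    have hz : ω A = 0 := by
      apply ω.map_eq_zero_of_eq A (i := k - i) (j := 0)
      · rw [hA0]
        have hne : k - i ≠ 0 := sub_ne_zero_of_ne hki
        simp only [hA, if_neg hne]
        congr 1
        abel
      · exact sub_ne_zero_of_ne hki
    rw [hωA, hz, mul_zero] at h2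
    have hlne : lam ^ (n-1) ≠ 0 := by positivity
    exact (mul_eq_zero.mp h2).resolve_left hlne
  -- norm identity
  have hnorm : ∀ i : Fin (n+1),
      (lam ^ (n-1))^2 * ‖v i‖^2 = ∏ j : Fin n, ‖v (i + j.succ)‖^2 := by
    intro i
    have h := hMCR e he i
    have hn : ‖lam ^ (n-1) • v i‖ = ‖((-1:ℝ)) ^ (n * (n - (i:ℕ))) • J (fun j : Fin n => v (i + j.succ))‖ := by rw [← h]
    rw [norm_smul, norm_smul] at hn
    have h1 : ‖lam ^ (n-1)‖ = lam ^ (n-1) := by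
      rw [Real.norm_eq_abs, abs_of_pos (by positivity)]
    have h2 : ‖((-1:ℝ)) ^ (n * (n - (i:ℕ)))‖ = 1 := by
      rw [Real.norm_eq_abs, abs_pow, abs_neg, abs_one, one_pow]
    rw [h1, h2, one_mul] at hn
    have hsq : (lam ^ (n-1))^2 * ‖v i‖^2 = ‖J (fun j : Fin n => v (i + j.succ))‖^2 := by
      rw [← mul_pow, hn]
    rw [hsq, hcomass]
    have hdiag : (Matrix.of fun j j' : Fin n =>
        (inner ℝ (v (i + j.succ)) (v (i + j'.succ)) : ℝ))
        = Matrix.diagonal (fun j => ‖v (i + j.succ)‖^2) := by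
      ext j j'
      by_cases hj : j = j'
      · subst hj
        simp [Matrix.diagonal, real_inner_self_eq_norm_sq]
      · have : i + j.succ ≠ i + j'.succ := by
          simp [Fin.succ_inj, hj]
        simp [Matrix.diagonal, hj, horth _ _ this]
    rw [hdiag, Matrix.det_diagonal]
  -- product identity
  have hP : ∀ i : Fin (n+1),
      (lam ^ (n-1))^2 * (‖v i‖^2)^2 = ∏ m : Fin (n+1), ‖v m‖^2 := by
    intro i
    have hsplit : ∏ m : Fin (n+1), ‖v m‖^2 = ∏ m : Fin (n+1), ‖v (i + m)‖^2 :=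
      (Equiv.prod_comp (Equiv.addLeft i) (fun m => ‖v m‖^2)).symm
    rw [hsplit, Fin.prod_univ_succ]
    have : i + 0 = i := add_zero i
    rw [this, ← hnorm i]
    ring
  -- constancy of norms
  have hconst : ∀ i : Fin (n+1), ‖v i‖^2 = ‖v 0‖^2 := by
    intro i
    have h1 := hP i
    have h2 := hP 0
    have hlne : (lam ^ (n-1))^2 ≠ 0 := by positivity
    have hsq : (‖v i‖^2)^2 = (‖v 0‖^2)^2 := mul_left_cancel₀ hlne (h1.trans h2.symm)
    have h3 : (0:ℝ) ≤ ‖v i‖^2 := by positivity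
    have h4 : (0:ℝ) ≤ ‖v 0‖^2 := by positivity
    nlinarith [hsq, h3, h4]
  -- value of the common norm
  have hval : ∀ i : Fin (n+1), ‖v i‖^2 = lam^2 := by
    have hl := hlam e
    have hsum : ∑ i, ‖φ (e i)‖^2 = (n+1 : ℝ) * ‖v 0‖^2 := by
      rw [show (∑ i, ‖φ (e i)‖^2) = ∑ i : Fin (n+1), ‖v i‖^2 from rfl]
      rw [Finset.sum_congr rfl (fun i _ => hconst i)]
      simp [Finset.card_univ]
    have hrp : (((n+1:ℝ)) ^ (-(1:ℝ)/2))^2 = (n+1:ℝ)⁻¹ := by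
      rw [← Real.rpow_natCast (((n+1:ℝ)) ^ (-(1:ℝ)/2)) 2, ← Real.rpow_mul (by positivity)]
      norm_num
      exact Real.rpow_neg_one _
    have hsumnn : (0:ℝ) ≤ ∑ i, ‖φ (e i)‖^2 := by positivity
    have hl2 : lam^2 = (n+1:ℝ)⁻¹ * (∑ i, ‖φ (e i)‖^2) := by
      rw [hl, mul_pow, hrp, Real.sq_sqrt hsumnn]
    intro i
    rw [hconst i, hl2, hsum]
    have h5 : (n+1:ℝ) ≠ 0 := by positivity
    field_simp
  -- conclude
  rw [orthonormal_iff_ite]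
  intro i j
  by_cases hij : i = j
  · subst hij
    rw [if_pos rfl]
    rw [real_inner_smul_left, real_inner_smul_right, real_inner_self_eq_norm_sq, hval i]
    field_simp
  · simp only [if_neg hij]
    rw [real_inner_smul_left, real_inner_smul_right, horth i j hij]
    ring
end

section
/- Any multiholomorphic map is weakly conformal: if u : X → M is a differentiable map between Riemannian manifolds where dim X = n+1, X carries its conformal n-triad and M a compatible n-triad, and u satisfies ð u = 0, then u*g = (n+1)^{-1} |du|² g_X pointwise. -/
open Fin.NatCast Fin.CommRing in
private lemma finRotate_pow_apply (n m : ℕ) (k : Fin (n+1)) :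
    ((finRotate (n+1)) ^ m) k = k + (m : Fin (n+1)) := by
  induction m generalizing k with
  | zero => simp
  | succ m ih =>
      rw [pow_succ, Equiv.Perm.mul_apply, finRotate_succ_apply, ih]
      push_cast
      ring

/-- pointwise form: a multiholomorphic map is weakly conformal.
At a point, the differential `φ = du_x : V → W` satisfies the linear
multi-CR equation (expressed on orthonormal oriented bases of `V`, with the
target vector cross product `J`), and then the pullback metric satisfies
`u*g = (n+1)^{-1}|du|² g_X`, i.e. `⟨φv, φw⟩ = (n+1)^{-1}‖φ‖²_HS ⟨v,w⟩`. -/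
theorem stmt_8 {V W : Type*}
    [NormedAddCommGroup V] [InnerProductSpace ℝ V] [FiniteDimensional ℝ V]
    [NormedAddCommGroup W] [InnerProductSpace ℝ W]
    (n : ℕ) (hdim : Module.finrank ℝ V = n + 1)
    (o : Orientation ℝ V (Fin (n+1)))
    (J : (Fin n → W) → W) (ω : W [⋀^Fin (n+1)]→ₗ[ℝ] ℝ)
    (hω : ∀ A : Fin (n+1) → W,
      (inner ℝ (A 0) (J (fun i : Fin n => A i.succ)) : ℝ) = ω A)
    (hcomass : ∀ A : Fin n → W,
      ‖J A‖ ^ 2 = (Matrix.of fun i j : Fin n => (inner ℝ (A i) (A j) : ℝ)).det)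
    (φ : V →ₗ[ℝ] W)
    (hMCR : ∀ e : OrthonormalBasis (Fin (n+1)) ℝ V,
      e.toBasis.orientation = o →
      ∀ i : Fin (n+1),
        ((((n+1 : ℝ)) ^ (-(1:ℝ)/2) * Real.sqrt (∑ k, ‖φ (e k)‖ ^ 2)) ^ (n-1)) •
            φ (e i) =
          ((-1 : ℝ)) ^ (n * (n - (i : ℕ))) •
            J (fun j : Fin n => φ (e (i + j.succ)))) :
    ∀ (e : OrthonormalBasis (Fin (n+1)) ℝ V) (v w : V),
      (inner ℝ (φ v) (φ w) : ℝ) =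
        ((∑ k, ‖φ (e k)‖ ^ 2) / (n+1 : ℝ)) * inner ℝ v w := by
  classical
  have hpos : (0:ℝ) < (n+1 : ℝ) := by positivity
  set f : OrthonormalBasis (Fin (n+1)) ℝ V := o.finOrthonormalBasis (Nat.succ_pos n) hdim
    with hfdef
  have hf : f.toBasis.orientation = o := o.finOrthonormalBasis_orientation (Nat.succ_pos n) hdim
  set S : ℝ := ∑ k, ‖φ (f k)‖ ^ 2 with hS
  set c : ℝ := ((n+1 : ℝ)) ^ (-(1:ℝ)/2) * Real.sqrt S with hc
  have hmcr := hMCR f hf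
  rw [← hS, ← hc] at hmcr
  -- diagonal inner products against the J-term
  have hdiagJ : ∀ i : Fin (n+1),
      (inner ℝ (φ (f i)) (J (fun j : Fin n => φ (f (i + j.succ)))) : ℝ)
        = (-1:ℝ)^(n * (i:ℕ)) * ω (fun k => φ (f k)) := by
    intro i
    have h1 := hω (fun k => φ (f (i + k)))
    have hA : (fun k : Fin (n+1) => φ (f (i + k)))
        = (fun k => φ (f k)) ∘ ((finRotate (n+1)) ^ (i:ℕ)) := by
      funext k
      simp only [Function.comp_apply, finRotate_pow_apply, Fin.cast_val_eq_self]
      rw [add_comm i k]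
    have hsign : Equiv.Perm.sign ((finRotate (n+1)) ^ (i:ℕ)) = (-1)^(n * (i:ℕ)) := by
      rw [map_pow, sign_finRotate, ← pow_mul, Nat.add_sub_cancel]
    have h2 : ω (fun k : Fin (n+1) => φ (f (i + k)))
        = (-1:ℝ)^(n * (i:ℕ)) * ω (fun k => φ (f k)) := by
      rw [hA, AlternatingMap.map_perm, hsign]
      simp only [Units.smul_def, Units.val_pow_eq_pow_val, Units.val_neg, Units.val_one,
        zsmul_eq_mul]
      push_cast
      ring
    simp only [add_zero] at h1
    rw [h2] at h1
    exact h1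
  -- off-diagonal inner products against the J-term vanish
  have hoffJ : ∀ i j : Fin (n+1), j ≠ i →
      (inner ℝ (φ (f j)) (J (fun l : Fin n => φ (f (i + l.succ)))) : ℝ) = 0 := by
    intro i j hne
    obtain ⟨m, hm⟩ : ∃ m : Fin n, j - i = m.succ := by
      apply Fin.eq_succ_of_ne_zero
      simpa [sub_eq_zero] using hne
    have hj : i + m.succ = j := by rw [← hm]; abel
    set A : Fin (n+1) → W := fun k => φ (f (i + k)) with hAdef
    set A' : Fin (n+1) → W := Function.update A 0 (A m.succ) with hA'
    have e1 : (fun l : Fin n => A' l.succ) = fun l => A l.succ := by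
      funext l
      rw [hA', Function.update_of_ne (Fin.succ_ne_zero l)]
    have e0 : A' 0 = φ (f j) := by
      rw [hA', Function.update_self, hAdef]
      simp [hj]
    have ez : ω A' = 0 := by
      apply ω.map_eq_zero_of_eq A' (i := 0) (j := m.succ)
      · rw [hA', Function.update_self, Function.update_of_ne (Fin.succ_ne_zero m)]
      · exact (Fin.succ_ne_zero m).symm
    have h1 := hω A'
    rw [e1, e0, ez] at h1
    exact h1
  -- key identities
  have key : ∀ i : Fin (n+1), c^(n-1) * ‖φ (f i)‖^2
      = (-1:ℝ)^(n*n) * ω (fun k => φ (f k)) := by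
    intro i
    have h := congrArg (fun y => (inner ℝ (φ (f i)) y : ℝ)) (hmcr i)
    simp only [real_inner_smul_right] at h
    rw [hdiagJ i, real_inner_self_eq_norm_sq] at h
    rw [h, ← mul_assoc, ← pow_add]
    have hexp : n*(n - (i:ℕ)) + n*(i:ℕ) = n*n := by
      rw [← Nat.mul_add, Nat.sub_add_cancel (Fin.is_le i)]
    rw [hexp]
  have keyoff : ∀ i j : Fin (n+1), j ≠ i →
      c^(n-1) * (inner ℝ (φ (f j)) (φ (f i)) : ℝ) = 0 := by
    intro i j hne
    have h := congrArg (fun y => (inner ℝ (φ (f j)) y : ℝ)) (hmcr i)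
    simp only [real_inner_smul_right] at h
    rw [hoffJ i j hne, mul_zero] at h
    exact h
  have hsum : c^(n-1) * S = (n+1) * ((-1:ℝ)^(n*n) * ω (fun k => φ (f k))) := by
    rw [hS, Finset.mul_sum]
    rw [Finset.sum_congr rfl fun i _ => key i]
    rw [Finset.sum_const, Finset.card_univ, Fintype.card_fin, nsmul_eq_mul]
    push_cast
    ring
  have gram : ∀ i j : Fin (n+1), (inner ℝ (φ (f i)) (φ (f j)) : ℝ)
      = (S/(n+1)) * (if i = j then 1 else 0) := by
    by_cases hcz : c^(n-1) = 0
    · have hS0 : S = 0 := by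
        rcases Nat.eq_zero_or_pos (n-1) with h0 | h0
        · rw [h0, pow_zero] at hcz; norm_num at hcz
        · have hc0 : c = 0 := pow_eq_zero_iff (by omega) |>.mp hcz
          have hr : ((n+1:ℝ)) ^ (-(1:ℝ)/2) ≠ 0 := ne_of_gt (Real.rpow_pos_of_pos hpos _)
          have hsq : Real.sqrt S = 0 := by
            rcases mul_eq_zero.mp (hc ▸ hc0) with h | h
            · exact absurd h hr
            · exact h
          have hSnn : 0 ≤ S := Finset.sum_nonneg fun k _ => by positivity
          nlinarith [Real.sq_sqrt hSnn]
      have hz : ∀ k, φ (f k) = 0 := by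
        intro k
        have hterm : ‖φ (f k)‖^2 = 0 := by
          have := (Finset.sum_eq_zero_iff_of_nonneg
            (fun k _ => by positivity : ∀ k ∈ Finset.univ, (0:ℝ) ≤ ‖φ (f k)‖^2)).mp
            (hS ▸ hS0) k (Finset.mem_univ k)
          exact this
        have : ‖φ (f k)‖ = 0 := by nlinarith [norm_nonneg (φ (f k))]
        exact norm_eq_zero.mp this
      intro i j
      simp [hz, hS0]
    · intro i j
      by_cases hij : i = j
      · subst hij
        have h1 := key i
        have h3 : c^(n-1) * (((n:ℝ)+1) * ‖φ (f i)‖^2) = c^(n-1) * S := by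
          calc c^(n-1) * (((n:ℝ)+1) * ‖φ (f i)‖^2)
              = ((n:ℝ)+1) * (c^(n-1) * ‖φ (f i)‖^2) := by ring
            _ = ((n:ℝ)+1) * ((-1:ℝ)^(n*n) * ω (fun k => φ (f k))) := by rw [h1]
            _ = c^(n-1) * S := hsum.symm
        have h4 := mul_left_cancel₀ hcz h3
        rw [real_inner_self_eq_norm_sq]
        simp only [if_pos rfl, mul_one]
        field_simp
        simp only [↓reduceIte, mul_one]
        linarith
      · have h0 := keyoff j i hij
        rcases mul_eq_zero.mp h0 with h | h
        · exact absurd h hcz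
        · simp [hij, h]
  -- conformality for all vectors
  have conf : ∀ v w : V, (inner ℝ (φ v) (φ w) : ℝ) = (S/(n+1)) * inner ℝ v w := by
    intro v w
    conv_lhs => rw [← f.sum_repr' v, ← f.sum_repr' w]
    rw [map_sum, map_sum, sum_inner]
    simp only [map_smul, inner_sum, real_inner_smul_left, real_inner_smul_right]
    rw [Finset.sum_congr rfl fun i _ => Finset.sum_congr rfl fun j _ => by rw [gram i j]]
    simp only [mul_ite, mul_one, mul_zero, Finset.sum_ite_eq, Finset.mem_univ, if_true]
    rw [← f.sum_inner_mul_inner v w, Finset.mul_sum]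
    refine Finset.sum_congr rfl fun i _ => ?_
    rw [real_inner_comm v (f i)]
    ring
  intro e v w
  have hSe : (∑ k, ‖φ (e k)‖^2) = S := by
    have h1 : ∀ k : Fin (n+1), ‖φ (e k)‖^2 = S/(n+1) := by
      intro k
      have := conf (e k) (e k)
      rw [real_inner_self_eq_norm_sq, real_inner_self_eq_norm_sq] at this
      rw [this, e.orthonormal.1 k]
      norm_num
    rw [Finset.sum_congr rfl fun k _ => h1 k]
    simp [Finset.sum_const, Fintype.card_fin, nsmul_eq_mul]
    field_simp
  rw [hSe]
  exact conf v w
end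

section
/- For a multiholomorphic map u : X³ → M⁷ into a G₂-manifold (ðu = 0), the function F(x) := (√3/|du|)·u*ω([X]) (evaluation of the pulled-back associative 3-form on the unit volume trivector, scaled by |du|⁻¹) satisfies F = (1/3)|du|² and u*g = F·h. Pointwise linear version: if φ : V³ → W⁷ is a linear solution of the multi-CR equation with n = 2, then ω(φ(e₀)∧φ(e₁)∧φ(e₂)) = 3^{-3/2} ‖φ‖_{HS}³ and φ^Tφ = (‖φ‖_{HS}²/3)·I_V. -/
noncomputable section

/-- The octonions via the Cayley–Dickson construction `𝕆 = ℍ ⊕ ℍ`. -/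
abbrev Octo : Type := Quaternion ℝ × Quaternion ℝ

/-- Octonion multiplication `(a,b)(c,d) = (ac − d̄b, da + bc̄)`. -/
def omul (x y : Octo) : Octo :=
  (x.1 * y.1 - star y.2 * x.2, y.2 * x.1 + x.2 * star y.1)

/-- Real part of an octonion. -/
def oRe (x : Octo) : ℝ := x.1.re

/-- Imaginary part of an octonion. -/
def oIm (x : Octo) : Octo := (x.1.im, x.2)

/-- Octonion conjugation `x̄ = Re x − Im x`. -/
def oconj (x : Octo) : Octo := (star x.1, -x.2)

/-- The Euclidean inner product `g(A,B) = Re(A·B̄)`. -/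
def og (x y : Octo) : ℝ := oRe (omul x (oconj y))

/-- The cross product on imaginary octonions, `J(A,B) = Im(A·B)`. -/
def oJ (x y : Octo) : Octo := oIm (omul x y)

lemma og_expand (x y : Octo) : og x y =
    x.1.re*y.1.re + x.1.imI*y.1.imI + x.1.imJ*y.1.imJ + x.1.imK*y.1.imK +
    x.2.re*y.2.re + x.2.imI*y.2.imI + x.2.imJ*y.2.imJ + x.2.imK*y.2.imK := by
  simp [og, omul, oconj, oRe]; ring

lemma og_self_nonneg (x : Octo) : 0 ≤ og x x := by
  rw [og_expand]
  linarith [mul_self_nonneg x.1.re, mul_self_nonneg x.1.imI, mul_self_nonneg x.1.imJ, mul_self_nonneg x.1.imK, mul_self_nonneg x.2.re, mul_self_nonneg x.2.imI, mul_self_nonneg x.2.imJ, mul_self_nonneg x.2.imK]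

lemma og_self_eq_zero {x : Octo} (h : og x x = 0) : x = 0 := by
  obtain ⟨⟨xa,xb,xc,xd⟩, ⟨xe,xf,xg,xh⟩⟩ := x
  rw [og_expand] at h
  have h' : xa^2+xb^2+xc^2+xd^2+xe^2+xf^2+xg^2+xh^2 = 0 := by linear_combination h
  have sq0 : ∀ t : ℝ, t^2 = 0 → t = 0 := fun t ht => by
    have := sq_nonneg t; nlinarith
  have : xa = 0 ∧ xb = 0 ∧ xc = 0 ∧ xd = 0 ∧ xe = 0 ∧ xf = 0 ∧ xg = 0 ∧ xh = 0 := by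
    refine ⟨sq0 _ ?_, sq0 _ ?_, sq0 _ ?_, sq0 _ ?_, sq0 _ ?_, sq0 _ ?_, sq0 _ ?_, sq0 _ ?_⟩ <;>
      linarith [sq_nonneg xa, sq_nonneg xb, sq_nonneg xc, sq_nonneg xd, sq_nonneg xe, sq_nonneg xf, sq_nonneg xg, sq_nonneg xh]
  obtain ⟨h1,h2,h3,h4,h5,h6,h7,h8⟩ := this
  subst h1 h2 h3 h4 h5 h6 h7 h8
  refine Prod.ext ?_ ?_ <;> · ext <;> rfl

lemma og_smul_left (c : ℝ) (x y : Octo) : og (c • x) y = c * og x y := by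
  simp [og_expand]; ring

lemma og_smul_right (c : ℝ) (x y : Octo) : og x (c • y) = c * og x y := by
  simp [og_expand]; ring

lemma og_add_left (x x' y : Octo) : og (x + x') y = og x y + og x' y := by
  simp [og_expand]; ring

lemma og_add_right (x y y' : Octo) : og x (y + y') = og x y + og x y' := by
  simp [og_expand]; ring

lemma og_symm (x y : Octo) : og x y = og y x := by
  simp [og_expand]; ring
lemma L1 (x y : Octo) (hx : x.1.re = 0) (hy : y.1.re = 0) : og (oJ x y) x = 0 := by
  obtain ⟨x1, x2⟩ := x
  obtain ⟨y1, y2⟩ := y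
  simp only at hx hy  -- maybe unneeded
  simp only [og_expand, oJ, omul, oIm]
  simp [Quaternion.re_mul, Quaternion.imI_mul, Quaternion.imJ_mul, Quaternion.imK_mul, hx, hy]
  ring

lemma L2 (x y : Octo) (hx : x.1.re = 0) (hy : y.1.re = 0) : og (oJ x y) y = 0 := by
  obtain ⟨x1, x2⟩ := x
  obtain ⟨y1, y2⟩ := y
  simp only at hx hy
  simp only [og_expand, oJ, omul, oIm]
  simp [Quaternion.re_mul, Quaternion.imI_mul, Quaternion.imJ_mul, Quaternion.imK_mul, hx, hy]
  ring

lemma L3 (x y : Octo) (hx : x.1.re = 0) (hy : y.1.re = 0) :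
    og (oJ x y) (oJ x y) = og x x * og y y - (og x y)^2 := by
  obtain ⟨x1, x2⟩ := x
  obtain ⟨y1, y2⟩ := y
  simp only at hx hy
  simp only [og_expand, oJ, omul, oIm]
  simp [Quaternion.re_mul, Quaternion.imI_mul, Quaternion.imJ_mul, Quaternion.imK_mul, hx, hy]
  ring

lemma key (a : Fin 3 → Octo) (him : ∀ i, (a i).1.re = 0)
    (h : ∀ i : Fin 3, ((3:ℝ) ^ (-(1:ℝ)/2) * Real.sqrt (∑ k, og (a k) (a k))) • a i
        = oJ (a (i+1)) (a (i+2))) :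
    ∀ i j, og (a i) (a j) =
      if i = j then (∑ k, og (a k) (a k)) / 3 else 0 := by
  set N2 : ℝ := ∑ k, og (a k) (a k) with hN2
  set c : ℝ := (3:ℝ) ^ (-(1:ℝ)/2) * Real.sqrt N2 with hc
  have hN2sum : N2 = og (a 0) (a 0) + og (a 1) (a 1) + og (a 2) (a 2) := by
    rw [hN2, Fin.sum_univ_three]
  have hnn0 := og_self_nonneg (a 0)
  have hnn1 := og_self_nonneg (a 1)
  have hnn2 := og_self_nonneg (a 2)
  have hN2nn : 0 ≤ N2 := by rw [hN2sum]; linarith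
  have hcnn : 0 ≤ c :=
    mul_nonneg (Real.rpow_nonneg (by norm_num) _) (Real.sqrt_nonneg _)
  have hc2 : c^2 = N2 / 3 := by
    rw [hc, mul_pow, Real.sq_sqrt hN2nn, ← Real.rpow_natCast ((3:ℝ) ^ (-(1:ℝ)/2)) 2,
      ← Real.rpow_mul (by norm_num)]
    norm_num
    ring
  have hoff1 : ∀ i, c * og (a (i+1)) (a i) = 0 := by
    intro i
    rw [og_symm, ← og_smul_left, h i]
    exact L1 _ _ (him _) (him _)
  have hoff2 : ∀ i, c * og (a (i+2)) (a i) = 0 := by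
    intro i
    rw [og_symm, ← og_smul_left, h i]
    exact L2 _ _ (him _) (him _)
  have hdiag : ∀ i, c^2 * og (a i) (a i) =
      og (a (i+1)) (a (i+1)) * og (a (i+2)) (a (i+2)) - (og (a (i+1)) (a (i+2)))^2 := by
    intro i
    have h' : c^2 * og (a i) (a i) = og (c • a i) (c • a i) := by
      rw [og_smul_left, og_smul_right]; ring
    rw [h', h i]
    exact L3 _ _ (him _) (him _)
  rcases eq_or_lt_of_le hcnn with hc0 | hcpos
  · -- c = 0 : everything vanishes
    have hs : Real.sqrt N2 = 0 := by
      by_contra hs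
      have h3 : ((3:ℝ) ^ (-(1:ℝ)/2)) ≠ 0 := by positivity
      exact (mul_ne_zero h3 hs) hc0.symm
    have hN20 : N2 = 0 := by
      have h' := (Real.sqrt_eq_zero hN2nn).mp hs
      exact h'
    have hsum0 : og (a 0) (a 0) + og (a 1) (a 1) + og (a 2) (a 2) = 0 := by
      rw [← hN2sum]; exact hN20
    have ha0 : a 0 = 0 := og_self_eq_zero (by linarith)
    have ha1 : a 1 = 0 := og_self_eq_zero (by linarith)
    have ha2 : a 2 = 0 := og_self_eq_zero (by linarith)
    have hog0 : og 0 0 = (0:ℝ) := by rw [og_expand]; simp [Quaternion.re_zero, Quaternion.imI_zero, Quaternion.imJ_zero, Quaternion.imK_zero]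
    intro i j
    have hi : a i = 0 := by fin_cases i <;> assumption
    have hj : a j = 0 := by fin_cases j <;> assumption
    rw [hi, hj, hog0, hN20]
    split_ifs <;> norm_num
  · -- c > 0
    have hc2pos : 0 < c^2 := pow_pos hcpos 2
    have g01 : og (a 0) (a 1) = 0 := by
      have h' := hoff1 0
      rw [show ((0:Fin 3)+1 = 1) from rfl] at h'
      rw [og_symm]
      exact (mul_eq_zero.mp h').resolve_left (ne_of_gt hcpos)
    have g02 : og (a 0) (a 2) = 0 := by
      have h' := hoff2 0
      rw [show ((0:Fin 3)+2 = 2) from rfl] at h'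
      rw [og_symm]
      exact (mul_eq_zero.mp h').resolve_left (ne_of_gt hcpos)
    have g12 : og (a 1) (a 2) = 0 := by
      have h' := hoff1 1
      rw [show ((1:Fin 3)+1 = 2) from rfl] at h'
      rw [og_symm]
      exact (mul_eq_zero.mp h').resolve_left (ne_of_gt hcpos)
    have g10 : og (a 1) (a 0) = 0 := by
      have h' := hoff2 1
      rw [show ((1:Fin 3)+2 = 0) from rfl] at h'
      rw [og_symm]
      exact (mul_eq_zero.mp h').resolve_left (ne_of_gt hcpos)
    have g20 : og (a 2) (a 0) = 0 := by
      have h' := hoff1 2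
      rw [show ((2:Fin 3)+1 = 0) from rfl] at h'
      rw [og_symm]
      exact (mul_eq_zero.mp h').resolve_left (ne_of_gt hcpos)
    have g21 : og (a 2) (a 1) = 0 := by
      have h' := hoff2 2
      rw [show ((2:Fin 3)+2 = 1) from rfl] at h'
      rw [og_symm]
      exact (mul_eq_zero.mp h').resolve_left (ne_of_gt hcpos)
    set x := og (a 0) (a 0) with hx
    set y := og (a 1) (a 1) with hy
    set z := og (a 2) (a 2) with hz
    have e0 : c^2 * x = y * z := by
      have h' := hdiag 0
      rw [show ((0:Fin 3)+2 = 2) from rfl, show ((0:Fin 3)+1 = 1) from rfl, g12] at h'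
      simpa using h'
    have e1 : c^2 * y = z * x := by
      have h' := hdiag 1
      rw [show ((1:Fin 3)+2 = 0) from rfl, show ((1:Fin 3)+1 = 2) from rfl, g20] at h'
      simpa using h'
    have e2 : c^2 * z = x * y := by
      have h' := hdiag 2
      rw [show ((2:Fin 3)+2 = 1) from rfl, show ((2:Fin 3)+1 = 0) from rfl, g01] at h'
      simpa using h'
    have hsum : x + y + z = N2 := hN2sum.symm
    have hc2' : c^2 = (x + y + z)/3 := by rw [hc2, hsum]
    have hxy : x = y := by nlinarith
    have hyz : y = z := by nlinarith
    have hx3 : x = N2/3 := by linarith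
    have hy3 : y = N2/3 := by linarith
    have hz3 : z = N2/3 := by linarith
    intro i j
    rcases eq_or_ne i j with rfl | hij
    · rw [if_pos rfl]
      fin_cases i
      exacts [hx3, hy3, hz3]
    · rw [if_neg hij]
      fin_cases i <;> fin_cases j <;>
        first
          | exact absurd rfl hij
          | exact g01 | exact g02 | exact g10 | exact g12 | exact g20 | exact g21


/-- pointwise linear version for the G₂-case, `n = 2`: if
`φ : V³ → Im 𝕆 ⊂ 𝕆 ≅ ℝ⁷` is a linear solution of the multi-CR equation
`3^{-1/2}‖φ‖_HS φ(eᵢ) = J(φ(e_{i+1}), φ(e_{i+2}))` (indices mod 3, `(eᵢ)`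
the standard oriented orthonormal basis, `J` the G₂ cross product and `ω` the
associative 3-form), then `ω(φe₀ ∧ φe₁ ∧ φe₂) = 3^{-3/2}‖φ‖³_HS` and
`φᵀφ = (‖φ‖²_HS/3)·I`, i.e. `u*g = F·h` with `F = (1/3)|du|²`. -/
theorem stmt_18 (φ : EuclideanSpace ℝ (Fin 3) →ₗ[ℝ] Octo)
    (him : ∀ v, oRe (φ v) = 0)
    (hMCR : ∀ i : Fin 3,
      ((3 : ℝ) ^ (-(1:ℝ)/2) *
          Real.sqrt (∑ k, og (φ (EuclideanSpace.basisFun (Fin 3) ℝ k))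
            (φ (EuclideanSpace.basisFun (Fin 3) ℝ k)))) •
        φ (EuclideanSpace.basisFun (Fin 3) ℝ i) =
      oJ (φ (EuclideanSpace.basisFun (Fin 3) ℝ (i+1)))
        (φ (EuclideanSpace.basisFun (Fin 3) ℝ (i+2)))) :
    og (oJ (φ (EuclideanSpace.basisFun (Fin 3) ℝ 0))
          (φ (EuclideanSpace.basisFun (Fin 3) ℝ 1)))
        (φ (EuclideanSpace.basisFun (Fin 3) ℝ 2)) =
      (3 : ℝ) ^ (-(3:ℝ)/2) *
        (Real.sqrt (∑ k, og (φ (EuclideanSpace.basisFun (Fin 3) ℝ k))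
          (φ (EuclideanSpace.basisFun (Fin 3) ℝ k)))) ^ 3 ∧
    ∀ v w : EuclideanSpace ℝ (Fin 3),
      og (φ v) (φ w) =
        ((∑ k, og (φ (EuclideanSpace.basisFun (Fin 3) ℝ k))
          (φ (EuclideanSpace.basisFun (Fin 3) ℝ k))) / 3) * inner ℝ v w := by
  classical
  set e := EuclideanSpace.basisFun (Fin 3) ℝ with he
  set N2 : ℝ := ∑ k, og (φ (e k)) (φ (e k)) with hN2
  have hg : ∀ i j, og (φ (e i)) (φ (e j)) = if i = j then N2 / 3 else 0 :=
    key (fun i => φ (e i)) (fun i => him _) (fun i => hMCR i)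
  have hnn : ∀ i, (0:ℝ) ≤ og (φ (e i)) (φ (e i)) := fun i => og_self_nonneg _
  have hN2nn : 0 ≤ N2 := by
    rw [hN2, Fin.sum_univ_three]
    linarith [hnn 0, hnn 1, hnn 2]
  constructor
  · have h2 := hMCR 2
    rw [show ((2:Fin 3)+1 = 0) from rfl, show ((2:Fin 3)+2 = 1) from rfl] at h2
    rw [← h2, og_smul_left]
    have q22 : og (φ (e 2)) (φ (e 2)) = N2 / 3 := by simpa using hg 2 2
    rw [q22]
    have h3 : (Real.sqrt N2)^3 = N2 * Real.sqrt N2 := by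
      rw [pow_succ, Real.sq_sqrt hN2nn]
    have hr : (3:ℝ) ^ (-(3:ℝ)/2) = (3:ℝ) ^ (-(1:ℝ)/2) * (3:ℝ)⁻¹ := by
      rw [show (-(3:ℝ)/2) = -(1:ℝ)/2 + (-1) by norm_num, Real.rpow_add (by norm_num),
        Real.rpow_neg_one]
    rw [h3, hr]
    ring
  · intro v w
    have hrep : ∀ u : EuclideanSpace ℝ (Fin 3),
        φ u = u 0 • φ (e 0) + u 1 • φ (e 1) + u 2 • φ (e 2) := by
      intro u
      have h' : u = u 0 • e 0 + u 1 • e 1 + u 2 • e 2 := by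
        have hs := (EuclideanSpace.basisFun (Fin 3) ℝ).sum_repr u
        rw [Fin.sum_univ_three] at hs
        simp only [EuclideanSpace.basisFun_repr] at hs
        rw [he]
        exact hs.symm
      conv_lhs => rw [h']
      rw [map_add, map_add, map_smul, map_smul, map_smul]
    have hi : (inner ℝ v w : ℝ) = v 0 * w 0 + v 1 * w 1 + v 2 * w 2 := by
      simp [PiLp.inner_apply, RCLike.inner_apply, Fin.sum_univ_three, mul_comm]
    have q00 : og (φ (e 0)) (φ (e 0)) = N2 / 3 := by simpa using hg 0 0
    have q11 : og (φ (e 1)) (φ (e 1)) = N2 / 3 := by simpa using hg 1 1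
    have q22 : og (φ (e 2)) (φ (e 2)) = N2 / 3 := by simpa using hg 2 2
    have q01 : og (φ (e 0)) (φ (e 1)) = 0 := by simpa using hg 0 1
    have q02 : og (φ (e 0)) (φ (e 2)) = 0 := by simpa using hg 0 2
    have q10 : og (φ (e 1)) (φ (e 0)) = 0 := by simpa using hg 1 0
    have q12 : og (φ (e 1)) (φ (e 2)) = 0 := by simpa using hg 1 2
    have q20 : og (φ (e 2)) (φ (e 0)) = 0 := by simpa using hg 2 0
    have q21 : og (φ (e 2)) (φ (e 1)) = 0 := by simpa using hg 2 1
    rw [hrep v, hrep w, hi]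
    simp only [og_add_left, og_add_right, og_smul_left, og_smul_right,
      q00, q11, q22, q01, q02, q10, q12, q20, q21]
    ring

end
end
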